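/- Let q be an odd prime power with q ≢ 1 (mod 4), and suppose ξ ∈ F_{q⁴}^* satisfies Tr_{F_{q⁴}/F_q}(ξ) = 0 and Tr_{F_{q⁴}/F_q}(ξ^{−1}) = 0, and that the minimal polynomial of ξ has degree 4 of the form x⁴ − cx² − d with c, d ∈ F_q and ξ^{2q} ≠ ξ². Then ξ^{2(q²−1)} = 1; in particular ord(ξ) ≤ 2(q²−1) < (q⁴−1)/3 for q > 2, so ξ is not 3-primitive. -/
import Mathlib


open Polynomial

/-- for an odd prime power `q ≢ 1 (mod 4)`, if `ξ ∈ F_{q⁴}^*` has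
`Tr(ξ) = 0`, `Tr(ξ⁻¹) = 0`, minimal polynomial of degree 4 of the form `x⁴ - cx² - d`,
and `ξ^{2q} ≠ ξ²`, then `ξ^{2(q²-1)} = 1`; hence `ord(ξ) ≤ 2(q²-1) < (q⁴-1)/3` and
`ξ` is not `3`-primitive. -/
theorem stmt_12 (p s q : ℕ) (hp : p.Prime) (hs : 0 < s) (hq : q = p ^ s)
    (hodd : Odd q) (hmod : q % 4 ≠ 1)
    (Fq F : Type) [Field Fq] [Field F] [Fintype Fq] [Fintype F] [Algebra Fq F]
    (hcardq : Fintype.card Fq = q) (hcardF : Fintype.card F = q ^ 4)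
    (ξ : F) (hξ : ξ ≠ 0)
    (htr : Algebra.trace Fq F ξ = 0) (htr' : Algebra.trace Fq F ξ⁻¹ = 0)
    (c d : Fq)
    (hmin : minpoly Fq ξ = X ^ 4 - Polynomial.C c * X ^ 2 - Polynomial.C d)
    (hdeg : (minpoly Fq ξ).natDegree = 4)
    (hne : ξ ^ (2 * q) ≠ ξ ^ 2) :
    ξ ^ (2 * (q ^ 2 - 1)) = 1 ∧ orderOf ξ ≤ 2 * (q ^ 2 - 1) ∧
      2 * (q ^ 2 - 1) < (q ^ 4 - 1) / 3 ∧ orderOf ξ ≠ (q ^ 4 - 1) / 3 := by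
  -- q ≥ 3
  have hq2 : 2 ≤ q := by
    rw [hq]; calc 2 = 2^1 := rfl
    _ ≤ p ^ s := Nat.pow_le_pow_left hp.two_le s |>.trans' (Nat.pow_le_pow_right (by omega) hs)
  have hq3 : 3 ≤ q := by
    rcases hodd with ⟨k, hk⟩; omega
  -- characteristic of F is p
  have hcharF : CharP F p := by
    haveI := ringChar.charP F
    obtain ⟨n, hn', hcard⟩ := FiniteField.card F (ringChar F)
    have : p ^ (4 * s) = ringChar F ^ (n : ℕ) := by
      rw [← hcard, hcardF, hq, ← pow_mul, mul_comm]
    have hdvd : p ∣ ringChar F ^ (n : ℕ) := ⟨p ^ (4 * s - 1), by rw [← this, ← pow_succ']; congr 1; omega⟩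
    have hpp : p = ringChar F := ((Nat.prime_dvd_prime_iff_eq hp hn').mp
      (hp.dvd_of_dvd_pow hdvd))
    rwa [hpp]
  haveI := hcharF
  haveI : ExpChar F p := ExpChar.prime hp
  set φ : F →+* F := iterateFrobenius F p s with hφ
  have hφdef : ∀ x : F, φ x = x ^ q := fun x => by rw [hφ, iterateFrobenius_def, hq]
  have hφa : ∀ a : Fq, φ (algebraMap Fq F a) = algebraMap Fq F a := by
    intro a
    rw [hφdef, ← map_pow, ← hcardq, FiniteField.pow_card]
  -- minimal polynomial relation
  have h1 : ξ ^ 4 = algebraMap Fq F c * ξ ^ 2 + algebraMap Fq F d := by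
    have := minpoly.aeval Fq ξ
    rw [hmin] at this
    simp only [map_sub, map_pow, aeval_X, map_mul, aeval_C] at this
    linear_combination this
  have h1' : (ξ ^ q) ^ 4 = algebraMap Fq F c * (ξ ^ q) ^ 2 + algebraMap Fq F d := by
    have h := congrArg φ h1
    rw [map_add, map_mul, hφa, hφa, map_pow, map_pow, hφdef] at h
    exact h
  have hney : (ξ ^ q) ^ 2 ≠ ξ ^ 2 := by
    rw [← pow_mul, mul_comm q 2]; exact hne
  have h2 : (ξ ^ q) ^ 2 + ξ ^ 2 = algebraMap Fq F c := by
    have hfac : ((ξ ^ q) ^ 2 - ξ ^ 2) * ((ξ ^ q) ^ 2 + ξ ^ 2)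
        = ((ξ ^ q) ^ 2 - ξ ^ 2) * algebraMap Fq F c := by
      linear_combination h1' - h1
    exact mul_left_cancel₀ (sub_ne_zero.mpr hney) hfac
  have h3 : ((ξ ^ q) ^ q) ^ 2 + (ξ ^ 2) ^ q = algebraMap Fq F c := by
    have h := congrArg φ h2
    rw [map_add, map_pow, map_pow, hφa, hφdef, hφdef] at h
    exact h
  have h4 : ((ξ ^ q) ^ q) ^ 2 = ξ ^ 2 := by linear_combination h3 - h2
  have h5 : ξ ^ (2 * q ^ 2) = ξ ^ 2 := by
    rw [← h4, ← pow_mul, ← pow_mul]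
    ring_nf
  have hmain : ξ ^ (2 * (q ^ 2 - 1)) = 1 := by
    have hq21 : 1 ≤ q ^ 2 := Nat.one_le_pow _ _ (by omega)
    have h6 : ξ ^ (2 * (q ^ 2 - 1)) * ξ ^ 2 = ξ ^ 2 := by
      rw [← pow_add]
      rw [show 2 * (q ^ 2 - 1) + 2 = 2 * q ^ 2 by omega]
      exact h5
    have hξ2 : ξ ^ 2 ≠ 0 := pow_ne_zero _ hξ
    field_simp at h6
    exact h6
  have h9 : 9 ≤ q ^ 2 := by nlinarith
  have hpos : 0 < 2 * (q ^ 2 - 1) := by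
    have : 2 ≤ q ^ 2 := by omega
    omega
  have hord : orderOf ξ ≤ 2 * (q ^ 2 - 1) :=
    Nat.le_of_dvd hpos (orderOf_dvd_of_pow_eq_one hmain)
  have hlt : 2 * (q ^ 2 - 1) < (q ^ 4 - 1) / 3 := by
    have hq4 : q ^ 4 = q ^ 2 * q ^ 2 := by ring
    have h99 : 9 * q ^ 2 ≤ q ^ 2 * q ^ 2 := Nat.mul_le_mul_right _ h9
    have key : ∀ a b : ℕ, 9 ≤ a → 9 * a ≤ b → 2 * (a - 1) < (b - 1) / 3 := by
      intro a b ha hb; omega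
    rw [hq4]
    exact key _ _ h9 h99
  exact ⟨hmain, hord, hlt, by omega⟩
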